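/- For a random variable X and a sigma-algebra ℋ, the map ξ ↦ E[ E[ξX|ℋ]² / E[ξ|ℋ] ] is convex on the set of a.s.-strictly-positive densities ξ (E[ξ]=1) for which the expressions are finite. Equivalently, for densities ξ₁, ξ₂ and s ∈ [0,1], writing R(ξ) for the measure with dR(ξ)/dP = ξ: E_{R(ξₛ)}[ (E_{R(ξₛ)}[X|ℋ])² ] ≤ s·E_{R(ξ₁)}[(E_{R(ξ₁)}[X|ℋ])²] + (1-s)·E_{R(ξ₂)}[(E_{R(ξ₂)}[X|ℋ])²], where ξₛ = sξ₁+(1-s)ξ₂. -/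

import Mathlib

open MeasureTheory

lemma integral_density_eq {Ω : Type*} [F : MeasurableSpace Ω] {μ : Measure Ω}
    [IsFiniteMeasure μ] {m : MeasurableSpace Ω} (hm : m ≤ F) {ξ h : Ω → ℝ}
    (hξ : Integrable ξ μ) (hh : StronglyMeasurable[m] h)
    (hint : Integrable (fun ω => ξ ω * h ω) μ) :
    ∫ ω, ξ ω * h ω ∂μ = ∫ ω, h ω * (μ[ξ|m]) ω ∂μ := by
  haveI : SigmaFinite (μ.trim hm) := by infer_instance
  have hint' : Integrable (h * ξ) μ := by
    refine hint.congr (Filter.Eventually.of_forall fun ω => ?_)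
    simp [mul_comm]
  have hmul : μ[h * ξ|m] =ᵐ[μ] h * μ[ξ|m] :=
    condExp_mul_of_stronglyMeasurable_left hh hint' hξ
  calc ∫ ω, ξ ω * h ω ∂μ = ∫ ω, (h * ξ) ω ∂μ := by
        refine integral_congr_ae (Filter.Eventually.of_forall fun ω => ?_)
        simp [mul_comm]
    _ = ∫ ω, (μ[h * ξ|m]) ω ∂μ := (integral_condExp hm).symm
    _ = ∫ ω, h ω * (μ[ξ|m]) ω ∂μ := integral_congr_ae (hmul.mono fun ω hω => by simpa using hω)

lemma integrable_mul_condexp {Ω : Type*} [F : MeasurableSpace Ω] {μ : Measure Ω}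
    [IsFiniteMeasure μ] {m : MeasurableSpace Ω} (hm : m ≤ F) {ξ h : Ω → ℝ}
    (hξ : Integrable ξ μ) (hh : StronglyMeasurable[m] h)
    (hint : Integrable (fun ω => ξ ω * h ω) μ) :
    Integrable (fun ω => h ω * (μ[ξ|m]) ω) μ := by
  haveI : SigmaFinite (μ.trim hm) := by infer_instance
  have hint' : Integrable (h * ξ) μ := by
    refine hint.congr (Filter.Eventually.of_forall fun ω => ?_)
    simp [mul_comm]
  have hmul : μ[h * ξ|m] =ᵐ[μ] h * μ[ξ|m] :=
    condExp_mul_of_stronglyMeasurable_left hh hint' hξ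
  exact integrable_condExp.congr (hmul.mono fun ω hω => by simpa using hω)

lemma condexp_pos_of_ae_pos {Ω : Type*} [F : MeasurableSpace Ω] {μ : Measure Ω}
    [IsFiniteMeasure μ] {m : MeasurableSpace Ω} (hm : m ≤ F) {ξ : Ω → ℝ}
    (hξ : Integrable ξ μ) (hpos : ∀ᵐ ω ∂μ, 0 < ξ ω) :
    ∀ᵐ ω ∂μ, 0 < (μ[ξ|m]) ω := by
  haveI : SigmaFinite (μ.trim hm) := by infer_instance
  letI : MeasurableSpace Ω := F
  set g := μ[ξ|m] with hg
  have hgm : Measurable[m] g := stronglyMeasurable_condExp.measurable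
  have hNm : MeasurableSet[m] {ω | g ω ≤ 0} := hgm measurableSet_Iic
  have hNF : MeasurableSet[F] {ω | g ω ≤ 0} := hm _ hNm
  have h1 : ∫ ω in {ω | g ω ≤ 0}, ξ ω ∂μ = ∫ ω in {ω | g ω ≤ 0}, g ω ∂μ :=
    (setIntegral_condExp hm hξ hNm).symm
  have h2 : ∫ ω in {ω | g ω ≤ 0}, g ω ∂μ ≤ 0 :=
    setIntegral_nonpos hNF (fun ω hω => hω)
  have h3 : 0 ≤ ∫ ω in {ω | g ω ≤ 0}, ξ ω ∂μ :=
    setIntegral_nonneg_of_ae_restrict (ae_restrict_of_ae (hpos.mono fun ω h => h.le))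
  have h0 : ∫ ω in {ω | g ω ≤ 0}, ξ ω ∂μ = 0 := le_antisymm (h1 ▸ h2) h3
  have hz : ξ =ᵐ[μ.restrict {ω | g ω ≤ 0}] 0 :=
    (integral_eq_zero_iff_of_nonneg_ae (ae_restrict_of_ae (hpos.mono fun ω h => h.le))
      hξ.integrableOn).mp h0
  have hFalse : ∀ᵐ ω ∂μ.restrict {ω | g ω ≤ 0}, False := by
    filter_upwards [ae_restrict_of_ae hpos, hz] with ω h1 h2
    simp only [Pi.zero_apply] at h2
    linarith
  have hμN : μ {ω | g ω ≤ 0} = 0 := by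
    rw [ae_iff] at hFalse
    simpa using hFalse
  rw [ae_iff]
  simpa [not_lt] using hμN

lemma perspective_convex (a₁ a₂ b₁ b₂ s : ℝ) (hb₁ : 0 < b₁) (hb₂ : 0 < b₂)
    (hs0 : 0 ≤ s) (hs1 : s ≤ 1) :
    ((s * a₁ + (1 - s) * a₂) / (s * b₁ + (1 - s) * b₂)) ^ 2 * (s * b₁ + (1 - s) * b₂)
      ≤ s * ((a₁ / b₁) ^ 2 * b₁) + (1 - s) * ((a₂ / b₂) ^ 2 * b₂) := by
  have h1s : (0:ℝ) ≤ 1 - s := by linarith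
  have hb : 0 < s * b₁ + (1 - s) * b₂ := by
    rcases lt_or_ge s 1 with h | h
    · nlinarith [mul_nonneg hs0 hb₁.le, mul_pos (by linarith : (0:ℝ) < 1 - s) hb₂]
    · have hs1' : s = 1 := le_antisymm hs1 h
      rw [hs1']; ring_nf; linarith
  have key : ∀ a b : ℝ, 0 < b → (a / b) ^ 2 * b = a ^ 2 / b := by
    intro a b hbb; field_simp
  rw [key _ _ hb, key _ _ hb₁, key _ _ hb₂]
  have hrhs : s * (a₁ ^ 2 / b₁) + (1 - s) * (a₂ ^ 2 / b₂)
      = (s * (a₁ ^ 2 * b₂) + (1 - s) * (a₂ ^ 2 * b₁)) / (b₁ * b₂) := by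
    field_simp
  rw [hrhs, div_le_div_iff₀ hb (mul_pos hb₁ hb₂)]
  nlinarith [mul_nonneg (mul_nonneg hs0 h1s) (sq_nonneg (a₁ * b₂ - a₂ * b₁))]


/-- Convexity of ξ ↦ E[E[ξX|ℋ]²/E[ξ|ℋ]] on strictly positive densities: writing
E_{R(ξ)}[X|ℋ] = E[ξX|ℋ]/E[ξ|ℋ] for the conditional expectation under dR(ξ) = ξ dP, for
densities ξ₁, ξ₂, s ∈ [0,1] and ξₛ = sξ₁+(1-s)ξ₂,
E_{R(ξₛ)}[(E_{R(ξₛ)}[X|ℋ])²] ≤ s·E_{R(ξ₁)}[(E_{R(ξ₁)}[X|ℋ])²] + (1-s)·E_{R(ξ₂)}[(E_{R(ξ₂)}[X|ℋ])²]. -/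
theorem stmt9 {Ω : Type*} {F : MeasurableSpace Ω} (μ : Measure Ω) [IsProbabilityMeasure μ]
    (m : MeasurableSpace Ω) (hm : m ≤ F)
    (ξ₁ ξ₂ X : Ω → ℝ)
    (hξ₁ : Integrable ξ₁ μ) (hξ₂ : Integrable ξ₂ μ)
    (hone₁ : ∫ ω, ξ₁ ω ∂μ = 1) (hone₂ : ∫ ω, ξ₂ ω ∂μ = 1)
    (hpos₁ : ∀ᵐ ω ∂μ, 0 < ξ₁ ω) (hpos₂ : ∀ᵐ ω ∂μ, 0 < ξ₂ ω)
    (hξ₁X : Integrable (fun ω => ξ₁ ω * X ω) μ) (hξ₂X : Integrable (fun ω => ξ₂ ω * X ω) μ)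
    (hfin₁ : Integrable
      (fun ω => ξ₁ ω * (((μ[(fun ω => ξ₁ ω * X ω)|m]) ω) / ((μ[ξ₁|m]) ω)) ^ 2) μ)
    (hfin₂ : Integrable
      (fun ω => ξ₂ ω * (((μ[(fun ω => ξ₂ ω * X ω)|m]) ω) / ((μ[ξ₂|m]) ω)) ^ 2) μ)
    (s : ℝ) (hs : s ∈ Set.Icc (0:ℝ) 1) :
    (∫ ω, (s * ξ₁ ω + (1 - s) * ξ₂ ω) *
        (((μ[(fun ω => (s * ξ₁ ω + (1 - s) * ξ₂ ω) * X ω)|m]) ω)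
          / ((μ[(fun ω => s * ξ₁ ω + (1 - s) * ξ₂ ω)|m]) ω)) ^ 2 ∂μ)
      ≤ s * ∫ ω, ξ₁ ω * (((μ[(fun ω => ξ₁ ω * X ω)|m]) ω) / ((μ[ξ₁|m]) ω)) ^ 2 ∂μ
        + (1 - s) * ∫ ω, ξ₂ ω * (((μ[(fun ω => ξ₂ ω * X ω)|m]) ω) / ((μ[ξ₂|m]) ω)) ^ 2 ∂μ := by
  obtain ⟨hs0, hs1⟩ := hs
  have h1s : (0:ℝ) ≤ 1 - s := by linarith
  haveI : SigmaFinite (μ.trim hm) := by infer_instance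
  letI : MeasurableSpace Ω := F
  set A₁ : Ω → ℝ := μ[(fun ω => ξ₁ ω * X ω)|m] with hA₁def
  set A₂ : Ω → ℝ := μ[(fun ω => ξ₂ ω * X ω)|m] with hA₂def
  set B₁ : Ω → ℝ := μ[ξ₁|m] with hB₁def
  set B₂ : Ω → ℝ := μ[ξ₂|m] with hB₂def
  set As : Ω → ℝ := μ[(fun ω => (s * ξ₁ ω + (1 - s) * ξ₂ ω) * X ω)|m] with hAsdef
  set Bs : Ω → ℝ := μ[(fun ω => s * ξ₁ ω + (1 - s) * ξ₂ ω)|m] with hBsdef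
  have hξs : Integrable (fun ω => s * ξ₁ ω + (1 - s) * ξ₂ ω) μ :=
    (hξ₁.const_mul s).add (hξ₂.const_mul (1 - s))
  have hposs : ∀ᵐ ω ∂μ, 0 < s * ξ₁ ω + (1 - s) * ξ₂ ω := by
    filter_upwards [hpos₁, hpos₂] with ω p1 p2
    rcases lt_or_ge s 1 with h | h
    · nlinarith [mul_nonneg hs0 p1.le, mul_pos (by linarith : (0:ℝ) < 1 - s) p2]
    · have hseq : s = 1 := le_antisymm hs1 h
      rw [hseq]; ring_nf; linarith
  have hB₁pos : ∀ᵐ ω ∂μ, 0 < B₁ ω := condexp_pos_of_ae_pos hm hξ₁ hpos₁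
  have hB₂pos : ∀ᵐ ω ∂μ, 0 < B₂ ω := condexp_pos_of_ae_pos hm hξ₂ hpos₂
  -- linearity of conditional expectation
  have hBlin : Bs =ᵐ[μ] fun ω => s * B₁ ω + (1 - s) * B₂ ω := by
    have e : (fun ω => s * ξ₁ ω + (1 - s) * ξ₂ ω) = s • ξ₁ + (1 - s) • ξ₂ := by
      funext ω; simp [smul_eq_mul]
    have h1 : μ[s • ξ₁ + (1 - s) • ξ₂|m] =ᵐ[μ] μ[s • ξ₁|m] + μ[(1 - s) • ξ₂|m] :=
      condExp_add (hξ₁.smul s) (hξ₂.smul (1 - s)) m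
    have h2 : μ[s • ξ₁|m] =ᵐ[μ] s • μ[ξ₁|m] := condExp_smul s ξ₁ m
    have h3 : μ[(1 - s) • ξ₂|m] =ᵐ[μ] (1 - s) • μ[ξ₂|m] := condExp_smul (1 - s) ξ₂ m
    rw [hBsdef, e]
    filter_upwards [h1, h2, h3] with ω e1 e2 e3
    simp only [Pi.add_apply] at e1
    simp [e1, e2, e3, smul_eq_mul, hB₁def, hB₂def]
  have hAlin : As =ᵐ[μ] fun ω => s * A₁ ω + (1 - s) * A₂ ω := by
    have e : (fun ω => (s * ξ₁ ω + (1 - s) * ξ₂ ω) * X ω)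
        = s • (fun ω => ξ₁ ω * X ω) + (1 - s) • (fun ω => ξ₂ ω * X ω) := by
      funext ω; simp [smul_eq_mul]; ring
    have h1 : μ[s • (fun ω => ξ₁ ω * X ω) + (1 - s) • (fun ω => ξ₂ ω * X ω)|m]
        =ᵐ[μ] μ[s • (fun ω => ξ₁ ω * X ω)|m] + μ[(1 - s) • (fun ω => ξ₂ ω * X ω)|m] :=
      condExp_add (hξ₁X.smul s) (hξ₂X.smul (1 - s)) m
    have h2 : μ[s • (fun ω => ξ₁ ω * X ω)|m] =ᵐ[μ] s • μ[(fun ω => ξ₁ ω * X ω)|m] :=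
      condExp_smul s _ m
    have h3 : μ[(1 - s) • (fun ω => ξ₂ ω * X ω)|m] =ᵐ[μ] (1 - s) • μ[(fun ω => ξ₂ ω * X ω)|m] :=
      condExp_smul (1 - s) _ m
    rw [hAsdef, e]
    filter_upwards [h1, h2, h3] with ω e1 e2 e3
    simp only [Pi.add_apply] at e1
    simp [e1, e2, e3, smul_eq_mul, hA₁def, hA₂def]
  -- strong measurability of the quotients squared
  have hmeas : ∀ (A B : Ω → ℝ), StronglyMeasurable[m] A → StronglyMeasurable[m] B →
      StronglyMeasurable[m] (fun ω => (A ω / B ω) ^ 2) := fun A B hA hB =>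
    ((hA.measurable.div hB.measurable).pow_const 2).stronglyMeasurable
  have hmeas₁ := hmeas A₁ B₁ stronglyMeasurable_condExp stronglyMeasurable_condExp
  have hmeas₂ := hmeas A₂ B₂ stronglyMeasurable_condExp stronglyMeasurable_condExp
  have hmeass := hmeas As Bs stronglyMeasurable_condExp stronglyMeasurable_condExp
  by_cases hints : Integrable (fun ω => (s * ξ₁ ω + (1 - s) * ξ₂ ω) * (As ω / Bs ω) ^ 2) μ
  · -- main case
    rw [integral_density_eq hm hξs hmeass hints,
      integral_density_eq hm hξ₁ hmeas₁ hfin₁,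
      integral_density_eq hm hξ₂ hmeas₂ hfin₂]
    have I1 : Integrable (fun ω => (A₁ ω / B₁ ω) ^ 2 * B₁ ω) μ :=
      integrable_mul_condexp hm hξ₁ hmeas₁ hfin₁
    have I2 : Integrable (fun ω => (A₂ ω / B₂ ω) ^ 2 * B₂ ω) μ :=
      integrable_mul_condexp hm hξ₂ hmeas₂ hfin₂
    have Is : Integrable (fun ω => (As ω / Bs ω) ^ 2 * Bs ω) μ :=
      integrable_mul_condexp hm hξs hmeass hints
    have hpt : ∀ᵐ ω ∂μ, (As ω / Bs ω) ^ 2 * Bs ω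
        ≤ s * ((A₁ ω / B₁ ω) ^ 2 * B₁ ω) + (1 - s) * ((A₂ ω / B₂ ω) ^ 2 * B₂ ω) := by
      filter_upwards [hB₁pos, hB₂pos, hAlin, hBlin] with ω p1 p2 eA eB
      rw [eA, eB]
      exact perspective_convex (A₁ ω) (A₂ ω) (B₁ ω) (B₂ ω) s p1 p2 hs0 hs1
    calc ∫ ω, (As ω / Bs ω) ^ 2 * Bs ω ∂μ
        ≤ ∫ ω, s * ((A₁ ω / B₁ ω) ^ 2 * B₁ ω) + (1 - s) * ((A₂ ω / B₂ ω) ^ 2 * B₂ ω) ∂μ :=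
          integral_mono_ae Is ((I1.const_mul s).add (I2.const_mul (1 - s))) hpt
      _ = s * ∫ ω, (A₁ ω / B₁ ω) ^ 2 * B₁ ω ∂μ + (1 - s) * ∫ ω, (A₂ ω / B₂ ω) ^ 2 * B₂ ω ∂μ := by
          rw [integral_add (I1.const_mul s) (I2.const_mul (1 - s)),
            integral_const_mul, integral_const_mul]
  · -- degenerate case: LHS integral is zero
    rw [integral_undef hints]
    have r1 : 0 ≤ ∫ ω, ξ₁ ω * (A₁ ω / B₁ ω) ^ 2 ∂μ := by
      refine integral_nonneg_of_ae ?_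
      filter_upwards [hpos₁] with ω p
      exact mul_nonneg p.le (sq_nonneg _)
    have r2 : 0 ≤ ∫ ω, ξ₂ ω * (A₂ ω / B₂ ω) ^ 2 ∂μ := by
      refine integral_nonneg_of_ae ?_
      filter_upwards [hpos₂] with ω p
      exact mul_nonneg p.le (sq_nonneg _)
    have := add_nonneg (mul_nonneg hs0 r1) (mul_nonneg h1s r2)
    linarith
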